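/- arXiv:1306.5505 — 2 statements merged into one kernel-verified Lean document; each statement's English description precedes it below -/
import Mathlib

section
/- Under the fixed-design Gaussian linear model with a model-selection procedure Ŝ and the Select+mLS estimator β̃ with threshold τ > 0, for every t ∈ ℝ^s one has |P(√n·(β̃(Y)_S − β*_S) ≤ t) − P(√n·(X_SᵀX_S)⁻¹X_Sᵀε ≤ t)| ≤ 2·P(Ŝ ≠ S), where ≤ between vectors is componentwise. (The second probability is the distribution function of the N(0, σ²C₁₁⁻¹) law; this is the finite-sample inequality underlying the asymptotic normality of Select+mLS.) -/
open Matrix MeasureTheory ProbabilityTheory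

lemma sum_restrict_aux {p s : ℕ} (hsp : s ≤ p) (f : Fin p → ℝ)
    (hf : ∀ j : Fin p, s ≤ (j : ℕ) → f j = 0) :
    ∑ j, f j = ∑ k : Fin s, f (Fin.castLE hsp k) := by
  classical
  have hm := Finset.sum_map (Finset.univ : Finset (Fin s))
      ⟨Fin.castLE hsp, Fin.castLE_injective hsp⟩ f
  simp only [Function.Embedding.coeFn_mk] at hm
  rw [← hm]
  refine (Finset.sum_subset (Finset.subset_univ _) ?_).symm
  intro j _ hj
  refine hf j (le_of_not_gt fun hlt => hj ?_)
  simp only [Finset.mem_map, Finset.mem_univ, Function.Embedding.coeFn_mk, true_and]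
  exact ⟨⟨(j : ℕ), hlt⟩, by ext; simp⟩

/-- In the fixed-design Gaussian linear model with a model-selection
procedure `Ŝ` and a Select+mLS estimator `β̃` with threshold `τ > 0`, for every
`t ∈ ℝ^s`,
`|P(√n(β̃(Y)_S − β*_S) ≤ t) − P(√n(X_SᵀX_S)⁻¹X_Sᵀε ≤ t)| ≤ 2·P(Ŝ ≠ S)`,
where `≤` between vectors is componentwise. -/
theorem selectMLS_distribution_approx
    {Ω : Type*} [MeasurableSpace Ω] (P : Measure Ω) [IsProbabilityMeasure P]
    {n p s : ℕ} (hs : 0 < s) (hsn : s < n) (hsp : s ≤ p)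
    (X : Matrix (Fin n) (Fin p) ℝ) (βstar : Fin p → ℝ)
    (hsupp : ∀ j : Fin p, s ≤ (j : ℕ) → βstar j = 0)
    (XS : Matrix (Fin n) (Fin s) ℝ) (hXS : ∀ i k, XS i k = X i (Fin.castLE hsp k))
    (hrank : (XSᵀ * XS).PosDef)
    (σ : ℝ) (hσ : 0 < σ) (ε : Ω → Fin n → ℝ)
    (hεmeas : ∀ i, Measurable fun ω => ε ω i)
    (hindep : iIndepFun (fun i ω => ε ω i) P)
    (hgauss : ∀ i, P.map (fun ω => ε ω i) = gaussianReal 0 ⟨σ ^ 2, sq_nonneg σ⟩)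
    (Y : Ω → Fin n → ℝ) (hY : ∀ ω, Y ω = X *ᵥ βstar + ε ω)
    (Shat : (Fin n → ℝ) → Set (Fin p)) (hShat : Measurable Shat)
    (τ : ℝ) (hτ : 0 < τ)
    (βtilde : (Fin n → ℝ) → Fin p → ℝ) (hβmeas : Measurable βtilde)
    (hbound : ∀ y : Fin n → ℝ,
      ∑ j, (βtilde y j) ^ 2 ≤ (∑ i, (y i) ^ 2) / (n * τ ^ 2))
    (hmLS : ∀ y : Fin n → ℝ, Shat y = {j : Fin p | (j : ℕ) < s} →
      (∀ k : Fin s, βtilde y (Fin.castLE hsp k) = ((XSᵀ * XS)⁻¹ *ᵥ (XSᵀ *ᵥ y)) k) ∧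
      (∀ j : Fin p, s ≤ (j : ℕ) → βtilde y j = 0))
    (t : Fin s → ℝ) :
    |(P {ω | ∀ k : Fin s,
          Real.sqrt n * (βtilde (Y ω) (Fin.castLE hsp k) - βstar (Fin.castLE hsp k)) ≤ t k}).toReal
      - (P {ω | ∀ k : Fin s,
          Real.sqrt n * (((XSᵀ * XS)⁻¹ *ᵥ (XSᵀ *ᵥ ε ω)) k) ≤ t k}).toReal|
      ≤ 2 * (P {ω | Shat (Y ω) ≠ {j : Fin p | (j : ℕ) < s}}).toReal := by
  classical
  set A := {ω | ∀ k : Fin s,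
      Real.sqrt n * (βtilde (Y ω) (Fin.castLE hsp k) - βstar (Fin.castLE hsp k)) ≤ t k}
  set B := {ω | ∀ k : Fin s,
      Real.sqrt n * (((XSᵀ * XS)⁻¹ *ᵥ (XSᵀ *ᵥ ε ω)) k) ≤ t k}
  set N := {ω | Shat (Y ω) ≠ {j : Fin p | (j : ℕ) < s}}
  -- On the complement of N the two integrands coincide
  have hXβ : X *ᵥ βstar = XS *ᵥ (fun k => βstar (Fin.castLE hsp k)) := by
    funext i
    simp only [mulVec, dotProduct]
    rw [sum_restrict_aux hsp (fun j => X i j * βstar j)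
      (fun j hj => by simp only [hsupp j hj, mul_zero])]
    exact Finset.sum_congr rfl fun k _ => by rw [hXS]
  have hdet : IsUnit (XSᵀ * XS).det := isUnit_iff_ne_zero.mpr hrank.det_pos.ne'
  have hinvβ : (XSᵀ * XS)⁻¹ *ᵥ (XSᵀ *ᵥ (X *ᵥ βstar))
      = fun k => βstar (Fin.castLE hsp k) := by
    rw [hXβ, mulVec_mulVec, mulVec_mulVec, Matrix.mul_assoc,
      Matrix.nonsing_inv_mul _ hdet, Matrix.one_mulVec]
  have hkey : ∀ ω, ω ∉ N → (ω ∈ A ↔ ω ∈ B) := by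
    intro ω hω
    have hG : Shat (Y ω) = {j : Fin p | (j : ℕ) < s} := not_not.mp hω
    obtain ⟨h1, -⟩ := hmLS (Y ω) hG
    have heq : ∀ k : Fin s,
        βtilde (Y ω) (Fin.castLE hsp k) - βstar (Fin.castLE hsp k)
          = ((XSᵀ * XS)⁻¹ *ᵥ (XSᵀ *ᵥ ε ω)) k := by
      intro k
      rw [h1 k, hY ω, Matrix.mulVec_add, Matrix.mulVec_add]
      have := congrFun hinvβ k
      simp only [Pi.add_apply, this]
      ring
    constructor <;> intro h k
    · rw [← heq k]; exact h k
    · rw [heq k]; exact h k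
  have hAB : A ∩ Nᶜ = B ∩ Nᶜ := by
    ext ω; constructor <;> intro ⟨h1, h2⟩
    · exact ⟨(hkey ω h2).mp h1, h2⟩
    · exact ⟨(hkey ω h2).mpr h1, h2⟩
  have hsub : ∀ C D : Set Ω, C ∩ Nᶜ = D ∩ Nᶜ → P C ≤ P D + P N := by
    intro C D hCD
    calc P C ≤ P ((C ∩ Nᶜ) ∪ N) := measure_mono (fun ω hω => by
          by_cases hN : ω ∈ N
          · exact Or.inr hN
          · exact Or.inl ⟨hω, hN⟩)
      _ ≤ P (C ∩ Nᶜ) + P N := measure_union_le _ _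
      _ = P (D ∩ Nᶜ) + P N := by rw [hCD]
      _ ≤ P D + P N := add_le_add (measure_mono Set.inter_subset_left) le_rfl
  have h1 := hsub A B hAB
  have h2 := hsub B A hAB.symm
  have hfin : ∀ C : Set Ω, (P C) ≠ ⊤ := fun C => measure_ne_top P C
  have hr1 : (P A).toReal ≤ (P B).toReal + (P N).toReal := by
    rw [← ENNReal.toReal_add (hfin B) (hfin N)]
    exact ENNReal.toReal_mono (by simp [hfin]) h1
  have hr2 : (P B).toReal ≤ (P A).toReal + (P N).toReal := by
    rw [← ENNReal.toReal_add (hfin A) (hfin N)]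
    exact ENNReal.toReal_mono (by simp [hfin]) h2
  have hN0 : 0 ≤ (P N).toReal := ENNReal.toReal_nonneg
  rw [abs_sub_le_iff]
  constructor <;> linarith
end

section
/- Let X_S be a real n×s matrix of full column rank whose i-th row is x_{i,S} ∈ ℝ^s, suppose the smallest eigenvalue of C₁₁ = (1/n)X_SᵀX_S is at least Λ_min > 0, and let ε ∈ ℝⁿ have i.i.d. N(0,σ²) entries. Then P( max_{1≤i≤n} |x_{i,S}ᵀ(X_SᵀX_S)⁻¹X_Sᵀε| ≥ 1/3 ) ≤ 9·(σ²/Λ_min)·(s/n)·max_{1≤i≤n}‖x_{i,S}‖₂². -/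
open Matrix MeasureTheory ProbabilityTheory

section Helpers
open Real MeasureTheory Filter ProbabilityTheory
open scoped NNReal ENNReal


lemma integrable_sq_mul_exp_neg_mul_sq {b : ℝ} (hb : 0 < b) :
    Integrable fun x : ℝ => x ^ 2 * Real.exp (-b * x ^ 2) := by
  have := integrable_rpow_mul_exp_neg_mul_sq hb (s := 2) (by norm_num)
  refine this.congr ?_
  filter_upwards with x
  rw [show ((2:ℝ)) = ((2:ℕ):ℝ) by norm_num, Real.rpow_natCast]

lemma integral_mul_exp_neg_mul_sq_eq_zero {b : ℝ} (hb : 0 < b) :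
    ∫ x : ℝ, x * Real.exp (-b * x ^ 2) = 0 := by
  have h := integral_neg_eq_self (fun x : ℝ => x * Real.exp (-b * x ^ 2)) volume
  simp only [neg_mul, neg_sq, neg_neg, integral_neg] at h ⊢
  linarith [h]

lemma integral_sq_mul_exp_neg_mul_sq {b : ℝ} (hb : 0 < b) :
    ∫ x : ℝ, x ^ 2 * Real.exp (-b * x ^ 2) = (1 / (2 * b)) * Real.sqrt (π / b) := by
  have hu : ∀ x : ℝ, HasDerivAt (fun y : ℝ => y) 1 x := fun x => hasDerivAt_id x
  have hv : ∀ x : ℝ, HasDerivAt (fun y : ℝ => -(1 / (2 * b)) * Real.exp (-b * y ^ 2))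
      (x * Real.exp (-b * x ^ 2)) x := by
    intro x
    have h1 : HasDerivAt (fun y : ℝ => -b * y ^ 2) (-b * (2 * x)) x := by
      simpa using ((hasDerivAt_pow 2 x).const_mul (-b))
    have h2 := (Real.hasDerivAt_exp (-b * x ^ 2)).comp x h1
    have h3 := h2.const_mul (-(1 / (2 * b)))
    refine h3.congr_deriv ?_
    field_simp
  have hint1 : Integrable (fun x : ℝ => x * (x * Real.exp (-b * x ^ 2))) := by
    refine (integrable_sq_mul_exp_neg_mul_sq hb).congr ?_
    filter_upwards with x; ring
  have hint2 : Integrable (fun x : ℝ => (1 : ℝ) * (-(1 / (2 * b)) * Real.exp (-b * x ^ 2))) := by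
    simpa using ((integrable_exp_neg_mul_sq hb).const_mul (-(1 / (2 * b)))).const_mul 1
  have hint3 : Integrable (fun x : ℝ => x * (-(1 / (2 * b)) * Real.exp (-b * x ^ 2))) := by
    refine ((integrable_mul_exp_neg_mul_sq hb).const_mul (-(1 / (2 * b)))).congr ?_
    filter_upwards with x; ring
  have := integral_mul_deriv_eq_deriv_mul_of_integrable (fun x _ => hu x) (fun x _ => hv x)
    (by simpa [Pi.mul_def] using hint1) (by simpa [Pi.mul_def] using hint2)
    (by simpa [Pi.mul_def] using hint3)
  rw [show (fun x : ℝ => x ^ 2 * Real.exp (-b * x ^ 2))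
      = fun x : ℝ => x * (x * Real.exp (-b * x ^ 2)) from funext fun x => by ring]
  rw [this]
  simp only [one_mul, integral_const_mul, integral_gaussian]
  ring

open ProbabilityTheory
open scoped NNReal ENNReal

lemma gaussianReal_moment_aux {v : ℝ≥0} (hv : v ≠ 0) :
    (Integrable (fun x : ℝ => x) (gaussianReal 0 v) ∧
     Integrable (fun x : ℝ => x ^ 2) (gaussianReal 0 v)) ∧
    (∫ x, x ∂(gaussianReal 0 v)) = 0 ∧
    (∫ x, x ^ 2 ∂(gaussianReal 0 v)) = (v : ℝ) := by
  have hvpos : (0 : ℝ) < v := by positivity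
  set b : ℝ := (2 * (v : ℝ))⁻¹ with hbdef
  have hb : 0 < b := by positivity
  set c : ℝ := (Real.sqrt (2 * π * v))⁻¹ with hcdef
  have hpdf : ∀ x : ℝ, gaussianPDFReal 0 v x = c * Real.exp (-b * x ^ 2) := by
    intro x
    rw [gaussianPDFReal]
    congr 1
    rw [hbdef]
    congr 1
    field_simp
    ring
  set f : ℝ → ℝ≥0 := fun x => (gaussianPDFReal 0 v x).toNNReal with hfdef
  have hfmeas : Measurable f := (measurable_gaussianPDFReal 0 v).real_toNNReal
  have hmeq : gaussianReal 0 v = volume.withDensity (fun x => (f x : ℝ≥0∞)) := by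
    rw [gaussianReal_of_var_ne_zero 0 hv]; rfl
  have hsmul : ∀ (x r : ℝ), f x • r = gaussianPDFReal 0 v x * r := by
    intro x r
    simp only [hfdef, NNReal.smul_def, smul_eq_mul, NNReal.coe_mk,
      Real.coe_toNNReal _ (gaussianPDFReal_nonneg 0 v x)]
  have hc : 0 ≤ c := by positivity
  have hint1 : Integrable (fun x : ℝ => x) (gaussianReal 0 v) := by
    rw [hmeq, integrable_withDensity_iff_integrable_smul hfmeas]
    have : Integrable (fun x : ℝ => c * (x * Real.exp (-b * x ^ 2))) volume :=
      (integrable_mul_exp_neg_mul_sq hb).const_mul c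
    refine this.congr ?_
    filter_upwards with x
    rw [hsmul, hpdf]; ring
  have hint2 : Integrable (fun x : ℝ => x ^ 2) (gaussianReal 0 v) := by
    rw [hmeq, integrable_withDensity_iff_integrable_smul hfmeas]
    have : Integrable (fun x : ℝ => c * (x ^ 2 * Real.exp (-b * x ^ 2))) volume :=
      (integrable_sq_mul_exp_neg_mul_sq hb).const_mul c
    refine this.congr ?_
    filter_upwards with x
    rw [hsmul, hpdf]; ring
  refine ⟨⟨hint1, hint2⟩, ?_, ?_⟩
  · rw [hmeq, integral_withDensity_eq_integral_smul hfmeas]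
    simp_rw [hsmul, hpdf]
    calc ∫ x : ℝ, c * Real.exp (-b * x ^ 2) * x
        = c * ∫ x : ℝ, x * Real.exp (-b * x ^ 2) := by
          rw [← integral_const_mul]; congr 1; funext x; ring
      _ = 0 := by rw [integral_mul_exp_neg_mul_sq_eq_zero hb, mul_zero]
  · rw [hmeq, integral_withDensity_eq_integral_smul hfmeas]
    simp_rw [hsmul, hpdf]
    calc ∫ x : ℝ, c * Real.exp (-b * x ^ 2) * x ^ 2
        = c * ∫ x : ℝ, x ^ 2 * Real.exp (-b * x ^ 2) := by
          rw [← integral_const_mul]; congr 1; funext x; ring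
      _ = c * ((1 / (2 * b)) * Real.sqrt (π / b)) := by
          rw [integral_sq_mul_exp_neg_mul_sq hb]
      _ = (v : ℝ) := by
          rw [hcdef, hbdef]
          rw [show π / (2 * (v:ℝ))⁻¹ = 2 * π * v by field_simp]
          rw [show (1:ℝ) / (2 * (2 * (v:ℝ))⁻¹) = v by field_simp]
          have hs : √(2 * π * (v:ℝ)) ≠ 0 := Real.sqrt_ne_zero'.mpr (by positivity)
          field_simp

lemma sum_sq_moment
    {Ω : Type*} [MeasurableSpace Ω] (P : Measure Ω) [IsProbabilityMeasure P]
    {n : ℕ} (σ : ℝ) (hσ : 0 < σ) (ε : Ω → Fin n → ℝ)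
    (hεmeas : ∀ i, Measurable fun ω => ε ω i)
    (hindep : iIndepFun (fun i ω => ε ω i) P)
    (hgauss : ∀ i, P.map (fun ω => ε ω i) = gaussianReal 0 ⟨σ ^ 2, sq_nonneg σ⟩)
    (a : Fin n → ℝ) :
    Integrable (fun ω => (∑ j, a j * ε ω j) ^ 2) P ∧
    ∫ ω, (∑ j, a j * ε ω j) ^ 2 ∂P = σ ^ 2 * ∑ j, (a j) ^ 2 := by
  set v : ℝ≥0 := ⟨σ ^ 2, sq_nonneg σ⟩ with hvdef
  have hv : v ≠ 0 := by
    intro h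
    have : σ ^ 2 = 0 := congrArg NNReal.toReal h
    nlinarith
  obtain ⟨⟨hgi1, hgi2⟩, hge1, hge2⟩ := gaussianReal_moment_aux hv
  have hint1 : ∀ j, Integrable (fun ω => ε ω j) P := by
    intro j
    have h := hgi1
    rw [← hgauss j] at h
    exact (integrable_map_measure h.aestronglyMeasurable (hεmeas j).aemeasurable).mp h
  have hint2 : ∀ j, Integrable (fun ω => (ε ω j) ^ 2) P := by
    intro j
    have h := hgi2
    rw [← hgauss j] at h
    exact (integrable_map_measure h.aestronglyMeasurable (hεmeas j).aemeasurable).mp h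
  have hE1 : ∀ j, ∫ ω, ε ω j ∂P = 0 := by
    intro j
    have h : ∫ x : ℝ, x ∂(P.map (fun ω => ε ω j)) = 0 := by rw [hgauss j]; exact hge1
    have h2 := integral_map (μ := P) (f := fun x : ℝ => x) (hεmeas j).aemeasurable
      measurable_id.aestronglyMeasurable
    exact h2.symm.trans h
  have hE2 : ∀ j, ∫ ω, (ε ω j) ^ 2 ∂P = σ ^ 2 := by
    intro j
    have h : ∫ x : ℝ, x ^ 2 ∂(P.map (fun ω => ε ω j)) = (v : ℝ) := by rw [hgauss j]; exact hge2
    have h2 := integral_map (μ := P) (f := fun x : ℝ => x ^ 2) (hεmeas j).aemeasurable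
      (measurable_id.pow_const 2).aestronglyMeasurable
    exact h2.symm.trans h
  have hprod : ∀ j l, Integrable (fun ω => ε ω j * ε ω l) P := by
    intro j l
    rcases eq_or_ne j l with rfl | hjl
    · refine (hint2 j).congr ?_
      filter_upwards with ω; rw [sq]
    · have h := (hindep.indepFun hjl).integrable_mul (hint1 j) (hint1 l)
      refine h.congr ?_
      filter_upwards with ω; rfl
  have hEprod : ∀ j l, ∫ ω, ε ω j * ε ω l ∂P = if j = l then σ ^ 2 else 0 := by
    intro j l
    rcases eq_or_ne j l with rfl | hjl
    · simp only [if_pos rfl, ← hE2 j]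
      congr 1; funext ω; rw [sq]
    · rw [if_neg hjl]
      have h := (hindep.indepFun hjl).integral_mul_eq_mul_integral
        (hint1 j).aestronglyMeasurable (hint1 l).aestronglyMeasurable
      simp only [Pi.mul_apply] at h
      rw [h,
        hE1 j, hE1 l, mul_zero]
  have hexp : ∀ ω, (∑ j, a j * ε ω j) ^ 2
      = ∑ j, ∑ l, (a j * a l) * (ε ω j * ε ω l) := by
    intro ω
    rw [sq, Finset.sum_mul_sum]
    refine Finset.sum_congr rfl fun j _ => Finset.sum_congr rfl fun l _ => by ring
  have hintall : Integrable (fun ω => ∑ j, ∑ l, (a j * a l) * (ε ω j * ε ω l)) P := by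
    refine integrable_finset_sum _ fun j _ => integrable_finset_sum _ fun l _ => ?_
    exact (hprod j l).const_mul _
  constructor
  · exact hintall.congr (by filter_upwards with ω; rw [hexp ω])
  · rw [show (fun ω => (∑ j, a j * ε ω j) ^ 2)
        = fun ω => ∑ j, ∑ l, (a j * a l) * (ε ω j * ε ω l) from funext hexp]
    rw [integral_finset_sum _ fun j _ => integrable_finset_sum _ fun l _ => (hprod j l).const_mul _]
    have : ∀ j : Fin n, ∫ ω, ∑ l, (a j * a l) * (ε ω j * ε ω l) ∂P = σ ^ 2 * (a j) ^ 2 := by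
      intro j
      rw [integral_finset_sum _ fun l _ => (hprod j l).const_mul _]
      have : ∀ l : Fin n, ∫ ω, (a j * a l) * (ε ω j * ε ω l) ∂P
          = if j = l then σ ^ 2 * (a j) ^ 2 else 0 := by
        intro l
        rw [integral_const_mul, hEprod j l]
        rcases eq_or_ne j l with rfl | hjl
        · simp [sq]; ring
        · simp [hjl]
      rw [Finset.sum_congr rfl fun l _ => this l]
      simp
    rw [Finset.sum_congr rfl fun j _ => this j, ← Finset.mul_sum]

end Helpers

/-- For a deterministic `n × s` matrix `X_S` of full column rank with rows
`x_{i,S}`, whose Gram matrix `C₁₁ = (1/n)X_SᵀX_S` has smallest eigenvalue at least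
`Λ_min > 0`, and `ε` with i.i.d. `N(0,σ²)` entries,
`P(max_i |x_{i,S}ᵀ(X_SᵀX_S)⁻¹X_Sᵀε| ≥ 1/3) ≤ 9·(σ²/Λ_min)·(s/n)·max_i ‖x_{i,S}‖₂²`. -/
theorem max_fitted_noise_prob_le
    {Ω : Type*} [MeasurableSpace Ω] (P : Measure Ω) [IsProbabilityMeasure P]
    {n s : ℕ} (hn : 0 < n)
    (XS : Matrix (Fin n) (Fin s) ℝ) (hrank : (XSᵀ * XS).PosDef)
    (Λmin : ℝ) (hΛ : 0 < Λmin)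
    (heig : ∀ v : Fin s → ℝ,
      Λmin * ∑ k, (v k) ^ 2 ≤ v ⬝ᵥ (((1 / (n : ℝ)) • (XSᵀ * XS)) *ᵥ v))
    (σ : ℝ) (hσ : 0 < σ) (ε : Ω → Fin n → ℝ)
    (hεmeas : ∀ i, Measurable fun ω => ε ω i)
    (hindep : iIndepFun (fun i ω => ε ω i) P)
    (hgauss : ∀ i, P.map (fun ω => ε ω i) = gaussianReal 0 ⟨σ ^ 2, sq_nonneg σ⟩) :
    (P {ω | ∃ i : Fin n, (1 : ℝ) / 3 ≤ |XS i ⬝ᵥ ((XSᵀ * XS)⁻¹ *ᵥ (XSᵀ *ᵥ ε ω))|}).toReal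
      ≤ 9 * (σ ^ 2 / Λmin) * ((s : ℝ) / n) * ⨆ i : Fin n, ∑ k, (XS i k) ^ 2 := by
  set B : Matrix (Fin s) (Fin s) ℝ := XSᵀ * XS with hBdef
  have hdet : IsUnit B.det := isUnit_iff_ne_zero.mpr hrank.det_pos.ne'
  set A : Matrix (Fin s) (Fin n) ℝ := B⁻¹ * XSᵀ with hAdef
  set Q : Ω → ℝ := fun ω => ∑ k : Fin s, (∑ j, A k j * ε ω j) ^ 2 with hQdef
  have hQnonneg : ∀ ω, 0 ≤ Q ω := fun ω => Finset.sum_nonneg fun k _ => sq_nonneg _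
  have hQint : Integrable Q P :=
    integrable_finset_sum _ fun k _ =>
      (sum_sq_moment P σ hσ ε hεmeas hindep hgauss (A k)).1
  -- value of ∫ Q
  have hQE : ∫ ω, Q ω ∂P = σ ^ 2 * ∑ k : Fin s, ∑ j, (A k j) ^ 2 := by
    rw [hQdef]
    rw [integral_finset_sum _ fun k _ =>
      (sum_sq_moment P σ hσ ε hεmeas hindep hgauss (A k)).1]
    rw [Finset.mul_sum]
    exact Finset.sum_congr rfl fun k _ =>
      (sum_sq_moment P σ hσ ε hεmeas hindep hgauss (A k)).2
  -- A * Aᵀ = B⁻¹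
  have hAA : A * Aᵀ = B⁻¹ := by
    rw [hAdef, transpose_mul, transpose_transpose, transpose_nonsing_inv]
    have hBsymm : Bᵀ = B := by rw [hBdef, transpose_mul, transpose_transpose]
    rw [hBsymm]
    calc B⁻¹ * XSᵀ * (XS * B⁻¹) = B⁻¹ * (XSᵀ * XS) * B⁻¹ := by
          rw [Matrix.mul_assoc, Matrix.mul_assoc, Matrix.mul_assoc]
      _ = B⁻¹ * (B * B⁻¹) := by rw [← hBdef, Matrix.mul_assoc]
      _ = B⁻¹ := by rw [Matrix.mul_nonsing_inv B hdet, Matrix.mul_one]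
  have hsum_eq : ∑ k : Fin s, ∑ j, (A k j) ^ 2 = ∑ k : Fin s, B⁻¹ k k := by
    refine Finset.sum_congr rfl fun k _ => ?_
    have : B⁻¹ k k = (A * Aᵀ) k k := by rw [hAA]
    rw [this, Matrix.mul_apply]
    exact (Finset.sum_congr rfl fun j _ => by rw [transpose_apply, sq]).symm
  -- diagonal bound
  have hc : (0 : ℝ) < (n : ℝ) * Λmin := by positivity
  have hdiag : ∀ k : Fin s, B⁻¹ k k ≤ 1 / ((n : ℝ) * Λmin) := by
    intro k
    set u : Fin s → ℝ := B⁻¹ *ᵥ Pi.single k 1 with hudef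
    have hBu : B *ᵥ u = Pi.single k 1 := by
      rw [hudef, Matrix.mulVec_mulVec, Matrix.mul_nonsing_inv B hdet, Matrix.one_mulVec]
    have huk : u k = B⁻¹ k k := by
      rw [hudef, Matrix.mulVec, dotProduct_single, mul_one]
    have h1 : Λmin * ∑ l, (u l) ^ 2 ≤ (1 / (n : ℝ)) * u k := by
      have := heig u
      rwa [smul_mulVec, dotProduct_smul, hBu, smul_eq_mul,
        dotProduct_single, mul_one] at this
    have h2 : (u k) ^ 2 ≤ ∑ l, (u l) ^ 2 :=
      Finset.single_le_sum (fun l _ => sq_nonneg (u l)) (Finset.mem_univ k)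
    have h3 : (n : ℝ) * Λmin * (u k) ^ 2 ≤ u k := by
      have hn' : (0 : ℝ) < n := by exact_mod_cast hn
      have := mul_le_mul_of_nonneg_left (le_trans
        (mul_le_mul_of_nonneg_left h2 hΛ.le) h1) hn'.le
      calc (n : ℝ) * Λmin * (u k) ^ 2 ≤ (n : ℝ) * ((1 / (n : ℝ)) * u k) := by
            rw [mul_assoc]; exact this
        _ = u k := by field_simp
    rw [← huk]
    rcases le_or_gt (u k) 0 with h | h
    · exact h.trans (by positivity)
    · rw [le_div_iff₀ hc]
      nlinarith
  have hBtrace : ∑ k : Fin s, B⁻¹ k k ≤ (s : ℝ) / ((n : ℝ) * Λmin) := by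
    calc ∑ k : Fin s, B⁻¹ k k ≤ ∑ _k : Fin s, 1 / ((n : ℝ) * Λmin) :=
          Finset.sum_le_sum fun k _ => hdiag k
      _ = (s : ℝ) / ((n : ℝ) * Λmin) := by
          rw [Finset.sum_const, Finset.card_univ, Fintype.card_fin, nsmul_eq_mul]
          ring
  have hEQ : ∫ ω, Q ω ∂P ≤ σ ^ 2 * ((s : ℝ) / ((n : ℝ) * Λmin)) := by
    rw [hQE, hsum_eq]
    exact mul_le_mul_of_nonneg_left hBtrace (sq_nonneg σ)
  -- sup facts
  set M : ℝ := ⨆ i : Fin n, ∑ k, (XS i k) ^ 2 with hMdef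
  have hMi : ∀ i, ∑ k, (XS i k) ^ 2 ≤ M := fun i =>
    le_ciSup (f := fun i : Fin n => ∑ k, (XS i k) ^ 2)
      (Set.Finite.bddAbove (Set.finite_range _)) i
  have hM0 : 0 ≤ M := by
    have := hMi ⟨0, hn⟩
    exact le_trans (Finset.sum_nonneg fun k _ => sq_nonneg _) this
  -- event inclusion
  have hsub : {ω | ∃ i : Fin n, (1 : ℝ) / 3 ≤ |XS i ⬝ᵥ ((XSᵀ * XS)⁻¹ *ᵥ (XSᵀ *ᵥ ε ω))|}
      ⊆ {ω | 1 / 9 ≤ M * Q ω} := by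
    intro ω ⟨i, hi⟩
    have hd : XS i ⬝ᵥ ((XSᵀ * XS)⁻¹ *ᵥ (XSᵀ *ᵥ ε ω)) = ∑ k, XS i k * ∑ j, A k j * ε ω j := by
      rw [Matrix.mulVec_mulVec, ← hBdef, ← hAdef, dotProduct]
      exact Finset.sum_congr rfl fun k _ => by rw [Matrix.mulVec, dotProduct]
    set d : ℝ := XS i ⬝ᵥ ((XSᵀ * XS)⁻¹ *ᵥ (XSᵀ *ᵥ ε ω)) with hddef
    have h19 : (1 : ℝ) / 9 ≤ d ^ 2 := by
      have h2 : ((1 : ℝ) / 3) ^ 2 ≤ |d| ^ 2 := by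
        apply pow_le_pow_left₀ (by norm_num) hi
      rwa [sq_abs, show ((1 : ℝ) / 3) ^ 2 = 1 / 9 by norm_num] at h2
    have hcs : d ^ 2 ≤ (∑ k, (XS i k) ^ 2) * Q ω := by
      show (XS i ⬝ᵥ ((XSᵀ * XS)⁻¹ *ᵥ (XSᵀ *ᵥ ε ω))) ^ 2 ≤ _
      rw [show XS i ⬝ᵥ ((XSᵀ * XS)⁻¹ *ᵥ (XSᵀ *ᵥ ε ω)) = ∑ k, XS i k * ∑ j, A k j * ε ω j from hd]
      have := Finset.sum_mul_sq_le_sq_mul_sq Finset.univ (fun k => XS i k)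
        (fun k => ∑ j, A k j * ε ω j)
      simpa [sq, hQdef] using this
    refine le_trans h19 (le_trans hcs ?_)
    exact mul_le_mul_of_nonneg_right (hMi i) (hQnonneg ω)
  -- Markov
  have hmarkov := mul_meas_ge_le_integral_of_nonneg
    (f := fun ω => M * Q ω) (μ := P)
    (ae_of_all _ fun ω => mul_nonneg hM0 (hQnonneg ω)) (hQint.const_mul M) (1 / 9)
  have hint_eq : ∫ ω, M * Q ω ∂P = M * ∫ ω, Q ω ∂P := integral_const_mul M Q
  have hmono : (P {ω | ∃ i : Fin n, (1 : ℝ) / 3 ≤ |XS i ⬝ᵥ ((XSᵀ * XS)⁻¹ *ᵥ (XSᵀ *ᵥ ε ω))|}).toReal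
      ≤ (P {ω | 1 / 9 ≤ M * Q ω}).toReal :=
    ENNReal.toReal_mono (measure_ne_top P _) (measure_mono hsub)
  have hfinal : (P {ω | 1 / 9 ≤ M * Q ω}).toReal ≤ 9 * (M * (σ ^ 2 * ((s : ℝ) / ((n : ℝ) * Λmin)))) := by
    have h9 : (P {ω | 1 / 9 ≤ M * Q ω}).toReal ≤ 9 * ∫ ω, M * Q ω ∂P := by
      simp only [measureReal_def] at hmarkov
      nlinarith [hmarkov, ENNReal.toReal_nonneg (a := P {ω | 1 / 9 ≤ M * Q ω})]
    refine h9.trans ?_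
    rw [hint_eq]
    have := mul_le_mul_of_nonneg_left hEQ hM0
    nlinarith
  refine le_trans (le_trans hmono hfinal) (le_of_eq ?_)
  have hn' : ((n : ℝ)) ≠ 0 := by positivity
  field_simp
end
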